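/- Let M(x) be the forward-backward envelope of L-smooth φ and proper closed convex g with γ ∈ (0, 1/L). Then for all x: (φ+g)(T_γ(x)) ≤ M(x) ≤ (φ+g)(x), where T_γ(x) = prox_{γg}(x − γ∇φ(x)) is the forward-backward operator. -/

import Mathlib

/-- The forward-backward envelope. -/
noncomputable def fbe {n : ℕ} (φ : EuclideanSpace ℝ (Fin n) → ℝ)
    (φ' : EuclideanSpace ℝ (Fin n) → EuclideanSpace ℝ (Fin n))
    (g : EuclideanSpace ℝ (Fin n) → ℝ) (γ : ℝ)
    (x : EuclideanSpace ℝ (Fin n)) : ℝ :=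
  ⨅ y : EuclideanSpace ℝ (Fin n),
    (φ x + (inner ℝ (φ' x) (y - x) : ℝ) + g y + ‖y - x‖ ^ 2 / (2 * γ))

open intervalIntegral in
theorem descent_lemma {n : ℕ} (φ : EuclideanSpace ℝ (Fin n) → ℝ)
    (φ' : EuclideanSpace ℝ (Fin n) → EuclideanSpace ℝ (Fin n)) (L : ℝ)
    (hφ' : ∀ x, HasGradientAt φ (φ' x) x)
    (hφL : ∀ x y, ‖φ' x - φ' y‖ ≤ L * ‖x - y‖) (x y : EuclideanSpace ℝ (Fin n)) :
    φ y ≤ φ x + inner ℝ (φ' x) (y - x) + L / 2 * ‖y - x‖ ^ 2 := by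
  set v := y - x with hv
  set c : ℝ → EuclideanSpace ℝ (Fin n) := fun t : ℝ => x + t • v with hcdef
  have hc : ∀ t : ℝ, HasDerivAt c v t := fun t => by
    simpa [hcdef] using ((hasDerivAt_id t).smul_const v).const_add x
  have hf : ∀ t : ℝ, HasDerivAt (fun t => φ (c t))
      ((inner ℝ (φ' (c t)) v : ℝ)) t := by
    intro t
    exact (hφ' (c t)).hasFDerivAt.comp_hasDerivAt t (hc t)
  have hφ'cont : Continuous φ' := by
    rcases le_or_gt L 0 with hL | hL
    · have : ∀ a b, φ' a = φ' b := by
        intro a b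
        have := hφL a b
        have h2 : L * ‖a - b‖ ≤ 0 := mul_nonpos_of_nonpos_of_nonneg hL (norm_nonneg _)
        have := le_trans this h2
        rwa [norm_le_zero_iff, sub_eq_zero] at this
      have : φ' = fun _ => φ' x := funext fun a => this a x
      rw [this]; exact continuous_const
    · exact (LipschitzWith.of_dist_le_mul (K := ⟨L, hL.le⟩) (by
        intro a b
        rw [dist_eq_norm, dist_eq_norm]; exact hφL a b)).continuous
  have hccont : Continuous c := by fun_prop
  have hcont : Continuous fun t : ℝ => (inner ℝ (φ' (c t)) v : ℝ) := by
    exact (hφ'cont.comp hccont).inner continuous_const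
  have hFTC : ∫ t in (0:ℝ)..1, (inner ℝ (φ' (c t)) v : ℝ) = φ (c 1) - φ (c 0) :=
    integral_eq_sub_of_hasDerivAt (fun t _ => hf t) (hcont.intervalIntegrable 0 1)
  have hc0 : c 0 = x := by simp [hcdef]
  have hc1 : c 1 = y := by simp [hcdef, hv]
  have hbound : ∀ t ∈ Set.Icc (0:ℝ) 1,
      (inner ℝ (φ' (c t)) v : ℝ) ≤ inner ℝ (φ' x) v + L * t * ‖v‖ ^ 2 := by
    intro t ht
    have h1 : (inner ℝ (φ' (c t)) v : ℝ) = inner ℝ (φ' x) v + inner ℝ (φ' (c t) - φ' x) v := by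
      rw [inner_sub_left]; ring
    rw [h1]
    gcongr
    calc (inner ℝ (φ' (c t) - φ' x) v : ℝ) ≤ ‖φ' (c t) - φ' x‖ * ‖v‖ :=
          real_inner_le_norm _ _
      _ ≤ (L * ‖c t - x‖) * ‖v‖ := by gcongr; exact hφL _ _
      _ = L * t * ‖v‖ ^ 2 := by
          have : c t - x = t • v := by simp [hcdef]
          rw [this, norm_smul, Real.norm_eq_abs, abs_of_nonneg ht.1]; ring
  have hint : ∫ t in (0:ℝ)..1, (inner ℝ (φ' (c t)) v : ℝ)
      ≤ ∫ t in (0:ℝ)..1, (inner ℝ (φ' x) v + L * t * ‖v‖ ^ 2 : ℝ) := by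
    apply integral_mono_on zero_le_one (hcont.intervalIntegrable 0 1)
    · exact (Continuous.intervalIntegrable (by fun_prop) 0 1)
    · exact hbound
  have hval : ∫ t in (0:ℝ)..1, (inner ℝ (φ' x) v + L * t * ‖v‖ ^ 2 : ℝ)
      = inner ℝ (φ' x) v + L / 2 * ‖v‖ ^ 2 := by
    rw [integral_add (intervalIntegrable_const) (by
      apply Continuous.intervalIntegrable; fun_prop)]
    have h2 : (fun t : ℝ => L * t * ‖v‖ ^ 2) = fun t : ℝ => (L * ‖v‖ ^ 2) * t := by
      funext t; ring
    rw [h2, integral_const_mul, integral_id]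
    simp
    ring
  rw [hc0, hc1] at hFTC
  linarith [hint, hval.symm ▸ hint, hFTC]

/-- Sandwich inequality for the forward-backward envelope:
`(φ+g)(T_γ(x)) ≤ M(x) ≤ (φ+g)(x)` where `T_γ(x) = prox_{γg}(x - γ∇φ(x))`. -/

theorem stmt_14 {n : ℕ} (φ : EuclideanSpace ℝ (Fin n) → ℝ)
    (φ' : EuclideanSpace ℝ (Fin n) → EuclideanSpace ℝ (Fin n))
    (g : EuclideanSpace ℝ (Fin n) → ℝ)
    (L γ : ℝ) (hL : 0 < L) (hγ0 : 0 < γ) (hγL : γ < 1 / L)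
    (hφconv : ConvexOn ℝ Set.univ φ)
    (hφ' : ∀ x, HasGradientAt φ (φ' x) x)
    (hφL : ∀ x y, ‖φ' x - φ' y‖ ≤ L * ‖x - y‖)
    (hgconv : ConvexOn ℝ Set.univ g) (hglsc : LowerSemicontinuous g)
    (prox : EuclideanSpace ℝ (Fin n) → EuclideanSpace ℝ (Fin n))
    (hprox : ∀ x, IsMinOn (fun y => g y + ‖y - x‖ ^ 2 / (2 * γ)) Set.univ (prox x)) :
    ∀ x, φ (prox (x - γ • φ' x)) + g (prox (x - γ • φ' x)) ≤ fbe φ φ' g γ x ∧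
      fbe φ φ' g γ x ≤ φ x + g x := by
  intro x
  set u := x - γ • φ' x with hu
  set p := prox u with hp
  set F : EuclideanSpace ℝ (Fin n) → ℝ := fun y =>
    φ x + (inner ℝ (φ' x) (y - x) : ℝ) + g y + ‖y - x‖ ^ 2 / (2 * γ) with hF
  -- key algebraic identity
  have key : ∀ y : EuclideanSpace ℝ (Fin n),
      F y = φ x - γ * ‖φ' x‖ ^ 2 / 2 + (g y + ‖y - u‖ ^ 2 / (2 * γ)) := by
    intro y
    have hyu : y - u = (y - x) + γ • φ' x := by
      rw [hu]; abel
    have hns : ‖y - u‖ ^ 2 = ‖y - x‖ ^ 2 + 2 * (γ * (inner ℝ (φ' x) (y - x) : ℝ))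
        + γ ^ 2 * ‖φ' x‖ ^ 2 := by
      rw [hyu, norm_add_sq_real, real_inner_smul_right, real_inner_comm, norm_smul,
        Real.norm_eq_abs, abs_of_pos hγ0, mul_pow]
    rw [hF]
    simp only
    rw [hns]
    field_simp
    ring
  -- minimality of p for F
  have hmin : ∀ y, F p ≤ F y := by
    intro y
    rw [key, key]
    have h := (hprox u) (Set.mem_univ y)
    simp only [Set.mem_setOf_eq] at h
    linarith
  have hbd : BddBelow (Set.range F) := ⟨F p, by rintro _ ⟨y, rfl⟩; exact hmin y⟩
  have hfbe_eq : fbe φ φ' g γ x = F p :=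
    le_antisymm (ciInf_le hbd p) (le_ciInf hmin)
  constructor
  · -- lower bound
    rw [hfbe_eq]
    have hdesc := descent_lemma φ φ' L hφ' hφL x p
    have hγL' : L ≤ 1 / γ := by
      rw [le_div_iff₀ hγ0]
      have := (lt_div_iff₀ hL).mp hγL
      linarith
    have h2 : L / 2 * ‖p - x‖ ^ 2 ≤ ‖p - x‖ ^ 2 / (2 * γ) := by
      rw [div_mul_eq_mul_div, div_le_div_iff₀ two_pos (by positivity)]
      calc L * ‖p - x‖ ^ 2 * (2 * γ) = (L * γ) * (2 * ‖p - x‖ ^ 2) := by ring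
        _ ≤ 1 * (2 * ‖p - x‖ ^ 2) := by
            apply mul_le_mul_of_nonneg_right _ (by positivity)
            calc L * γ ≤ (1/γ) * γ := by
                  apply mul_le_mul_of_nonneg_right hγL' hγ0.le
              _ = 1 := by field_simp
        _ = ‖p - x‖ ^ 2 * 2 := by ring
    rw [hF]
    simp only
    linarith
  · -- upper bound
    calc fbe φ φ' g γ x ≤ F x := ciInf_le hbd x
      _ = φ x + g x := by rw [hF]; simp
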